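/- For the c-random walk on Ω_M (0 < c < M, r_j = (1 − c/M)(c/M)^{j−1}), lim_{L→∞} Var N_n(L) = 0 if c < 1, = 2n if c = 1, and = ∞ if c > 1. -/

import Mathlib

open MeasureTheory Filter
open scoped ENNReal NNReal BigOperators Topology

noncomputable section

/-- The hierarchical group of order `M`: finitely supported sequences with entries in `ZMod M`,
with componentwise addition mod `M`. -/
abbrev Omega (M : ℕ) := ℕ →₀ ZMod M

/-- The hierarchical norm: `|x| = max {i : x_i ≠ 0}` (coordinates indexed from 1), `|0| = 0`. -/
def hnorm {M : ℕ} (x : Omega M) : ℕ := x.support.sup (· + 1)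

instance {M : ℕ} : MeasurableSpace (Omega M) := ⊤

/-- The `n`-step distribution of the random walk with step distribution `ρ`, started at `0`. -/
def walk {M : ℕ} (ρ : PMF (Omega M)) : ℕ → PMF (Omega M)
  | 0 => PMF.pure 0
  | n + 1 => (walk ρ n).bind fun x => ρ.map (x + ·)


namespace CW

variable {M : ℕ}

/-- the ball of radius L -/
def B (M L : ℕ) : Set (Omega M) := {x | hnorm x ≤ L}

lemma hnorm_le_iff {x : Omega M} {L : ℕ} : hnorm x ≤ L ↔ ∀ i ∈ x.support, i < L := by
  simp only [hnorm, Finset.sup_le_iff, Nat.lt_iff_add_one_le]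

lemma mem_B_iff {x : Omega M} {L : ℕ} : x ∈ B M L ↔ ∀ i ∈ x.support, i < L := by
  simp [B, hnorm_le_iff]

lemma hnorm_eq_zero_iff {x : Omega M} : hnorm x = 0 ↔ x = 0 := by
  constructor
  · intro h
    by_contra hx
    obtain ⟨i, hi⟩ := Finsupp.support_nonempty_iff.2 hx
    have h1 : i + 1 ≤ hnorm x := Finset.le_sup (f := (· + 1)) hi
    omega
  · intro h; subst h; simp [hnorm]

lemma hnorm_neg (x : Omega M) : hnorm (-x) = hnorm x := by
  simp [hnorm, Finsupp.support_neg]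

lemma zero_mem_B (L : ℕ) : (0 : Omega M) ∈ B M L := by
  simp [mem_B_iff]

lemma add_mem_B {x y : Omega M} {L : ℕ} (hx : x ∈ B M L) (hy : y ∈ B M L) : x + y ∈ B M L := by
  rw [mem_B_iff] at *
  intro i hi
  have := Finsupp.support_add (g₁ := x) (g₂ := y) hi
  rcases Finset.mem_union.1 this with h | h
  exacts [hx i h, hy i h]

lemma neg_mem_B {x : Omega M} {L : ℕ} (hx : x ∈ B M L) : -x ∈ B M L := by
  rw [mem_B_iff] at *; simpa [Finsupp.support_neg] using hx

lemma add_mem_B_iff {x s : Omega M} {L : ℕ} (hx : x ∈ B M L) : x + s ∈ B M L ↔ s ∈ B M L := by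
  constructor
  · intro h
    have := add_mem_B (neg_mem_B hx) h
    simpa using this
  · exact fun h => add_mem_B hx h

end CW

namespace CW
variable {M : ℕ}

def ballEquiv (M L : ℕ) : ↥(B M L) ≃ (↥(Finset.range L) →₀ ZMod M) :=
  (Equiv.subtypeEquivRight (p := fun x : Omega M => x ∈ B M L)
    (q := fun f : Omega M => ↑f.support ⊆ (↑(Finset.range L) : Set ℕ)) (fun x => by
    simp [mem_B_iff, Set.subset_def, Finset.mem_coe, Finset.mem_range])).trans
    (Finsupp.restrictSupportEquiv (↑(Finset.range L) : Set ℕ) (ZMod M))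

lemma finiteB (hM : 1 ≤ M) (L : ℕ) : Finite ↥(B M L) := by
  haveI : NeZero M := ⟨by omega⟩
  exact Finite.of_equiv _ (ballEquiv M L).symm

lemma natCard_B (hM : 1 ≤ M) (L : ℕ) : Nat.card ↥(B M L) = M ^ L := by
  haveI : NeZero M := ⟨by omega⟩
  rw [Nat.card_congr ((ballEquiv M L).trans (Finsupp.equivFunOnFinite))]
  rw [Nat.card_fun]
  simp only [Nat.card_eq_fintype_card, ZMod.card]
  congr 1
  rw [← Nat.card_eq_fintype_card,
    Nat.card_congr ((Equiv.subtypeEquivRight (fun x => Finset.mem_range)).trans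
      (Fin.equivSubtype (n := L)).symm),
    Nat.card_eq_fintype_card, Fintype.card_fin]

lemma encard_B (hM : 1 ≤ M) (L : ℕ) : (B M L).encard = ((M ^ L : ℕ) : ℕ∞) := by
  haveI := finiteB hM L
  have hfin : (B M L).Finite := Set.toFinite _
  rw [← hfin.cast_ncard_eq, ← Nat.card_coe_set_eq, natCard_B hM]

end CW

namespace CW
variable {M : ℕ}

lemma measurableSet_all (s : Set (Omega M)) : MeasurableSet s :=
  MeasurableSpace.measurableSet_top

lemma measurable_all' (f : Omega M → Omega M) : Measurable f :=
  fun _ _ => MeasurableSpace.measurableSet_top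

lemma toMeasure_apply' (p : PMF (Omega M)) (s : Set (Omega M)) :
    p.toMeasure s = ∑' x, s.indicator p x :=
  PMF.toMeasure_apply (p := p) (s := s) (measurableSet_all s)

lemma tsum_one_B (hM : 1 ≤ M) (L : ℕ) :
    ∑' (_ : ↥(B M L)), (1 : ℝ≥0∞) = (M : ℝ≥0∞) ^ L := by
  rw [ENNReal.tsum_set_one, encard_B hM]
  push_cast
  simp

lemma tsum_indicator_shift (hM : 1 ≤ M) (L : ℕ) (x : Omega M) :
    ∑' u : Omega M, (B M L).indicator (fun _ => (1 : ℝ≥0∞)) (u + x) = (M : ℝ≥0∞) ^ L := by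
  have h1 : ∑' u : Omega M, (B M L).indicator (fun _ => (1:ℝ≥0∞)) (u + x)
      = ∑' v : Omega M, (B M L).indicator (fun _ => (1:ℝ≥0∞)) v := by
    simpa using (Equiv.addRight x).tsum_eq (fun v => (B M L).indicator (fun _ => (1:ℝ≥0∞)) v)
  rw [h1, ← tsum_subtype]
  exact tsum_one_B hM L

lemma sub_mem_B {x y : Omega M} {L : ℕ} (hx : x ∈ B M L) (hy : y ∈ B M L) : x - y ∈ B M L := by
  rw [sub_eq_add_neg]; exact add_mem_B hx (neg_mem_B hy)

lemma tsum_indicator_two (hM : 1 ≤ M) (L : ℕ) (x y : Omega M) :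
    ∑' u : Omega M, (B M L).indicator (fun _ => (1 : ℝ≥0∞)) (u + x) *
      (B M L).indicator (fun _ => (1 : ℝ≥0∞)) (u + y)
    = (M : ℝ≥0∞) ^ L * (B M L).indicator (fun _ => (1 : ℝ≥0∞)) (x - y) := by
  by_cases h : x - y ∈ B M L
  · have he : ∀ u : Omega M, u + x ∈ B M L ↔ u + y ∈ B M L := by
      intro u
      constructor
      · intro hu
        have := sub_mem_B hu h
        have hxy : u + x - (x - y) = u + y := by abel
        rwa [hxy] at this
      · intro hu
        have := add_mem_B hu h
        have hxy : u + y + (x - y) = u + x := by abel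
        rwa [hxy] at this
    have : ∀ u : Omega M, (B M L).indicator (fun _ => (1 : ℝ≥0∞)) (u + x) *
        (B M L).indicator (fun _ => (1 : ℝ≥0∞)) (u + y)
        = (B M L).indicator (fun _ => (1 : ℝ≥0∞)) (u + x) := by
      intro u
      by_cases hu : u + x ∈ B M L
      · rw [Set.indicator_of_mem hu, Set.indicator_of_mem ((he u).1 hu)]; simp
      · rw [Set.indicator_of_notMem hu]; simp
    rw [tsum_congr this, tsum_indicator_shift hM L x, Set.indicator_of_mem h]
    simp
  · have : ∀ u : Omega M, (B M L).indicator (fun _ => (1 : ℝ≥0∞)) (u + x) *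
        (B M L).indicator (fun _ => (1 : ℝ≥0∞)) (u + y) = 0 := by
      intro u
      by_cases hux : u + x ∈ B M L
      · by_cases huy : u + y ∈ B M L
        · exfalso
          have := sub_mem_B hux huy
          have hxy : u + x - (u + y) = x - y := by abel
          rw [hxy] at this
          exact h this
        · rw [Set.indicator_of_notMem huy]; simp
      · rw [Set.indicator_of_notMem hux]; simp
    rw [tsum_congr this, Set.indicator_of_notMem h]
    simp

end CW

namespace CW

section Rho

variable {M : ℕ} (hM : 2 ≤ M) {c : ℝ} (hc0 : 0 < c) (hcM : c < M)
  {r : ℕ → ℝ≥0∞}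
  (hrdef : ∀ j : ℕ, r j = ENNReal.ofReal ((1 - c / M) * (c / M) ^ (j - 1)))
  {ρ : PMF (Omega M)} (hρ0 : ρ 0 = 0)
  (hρ : ∀ y : Omega M, y ≠ 0 →
    ρ y = r (hnorm y) / ((M : ℝ≥0∞) ^ (hnorm y - 1) * ((M : ℝ≥0∞) - 1)))

include hM hρ in
lemma rho_sphere (L : ℕ) : ρ.toMeasure (B M (L+1) \ B M L) = r (L+1) := by
  have hBsub : B M L ⊆ B M (L+1) := by
    intro y hy
    simp only [B, Set.mem_setOf_eq] at *
    omega
  have hval : ∀ y ∈ B M (L+1) \ B M L,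
      ρ y = r (L+1) / ((M:ℝ≥0∞)^L * ((M:ℝ≥0∞) - 1)) := by
    intro y hy
    have h1 : hnorm y ≤ L + 1 := hy.1
    have h2 : ¬ hnorm y ≤ L := hy.2
    have h3 : hnorm y = L + 1 := by omega
    have h4 : y ≠ 0 := by
      intro h; rw [h] at h3; rw [hnorm_eq_zero_iff.mpr rfl] at h3; omega
    rw [hρ y h4, h3]
    norm_num
  have hcard : (B M (L+1) \ B M L).encard = ((M^L * (M-1) : ℕ) : ℕ∞) := by
    have h5 := Set.encard_diff_add_encard_of_subset hBsub
    rw [encard_B (by omega) L, encard_B (by omega) (L+1)] at h5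
    have h6 : ((M^L * (M-1) : ℕ) : ℕ∞) + ((M ^ L : ℕ) : ℕ∞) = ((M ^ (L+1) : ℕ) : ℕ∞) := by
      rw [← Nat.cast_add]
      congr 1
      obtain ⟨m, rfl⟩ : ∃ m, M = m + 1 := ⟨M - 1, by omega⟩
      simp only [Nat.add_sub_cancel, pow_succ]
      ring
    rw [← h6] at h5
    exact WithTop.add_right_cancel (by exact_mod_cast ENat.coe_ne_top (M^L)) h5
  rw [toMeasure_apply', ← tsum_subtype]
  rw [tsum_congr (fun y : ↥(B M (L+1) \ B M L) => hval y y.2)]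
  rw [ENNReal.tsum_set_const, hcard]
  have hden : ((M^L * (M-1) : ℕ) : ℝ≥0∞) = (M:ℝ≥0∞)^L * ((M:ℝ≥0∞) - 1) := by
    push_cast [Nat.cast_sub (by omega : 1 ≤ M)]
    ring
  rw [show (((M ^ L * (M - 1) : ℕ) : ℕ∞) : ℝ≥0∞) = ((M^L * (M-1) : ℕ) : ℝ≥0∞) by simp]
  rw [hden]
  refine ENNReal.mul_div_cancel' (fun h => absurd h ?_) (fun h => absurd h ?_)
  · apply mul_ne_zero
    · exact pow_ne_zero _ (by simp; omega)
    · simp only [ne_eq, tsub_eq_zero_iff_le, not_le]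
      exact_mod_cast (by omega : 1 < M)
  · exact ENNReal.mul_ne_top (by simp) (by simp)

end Rho

end CW

namespace CW
section Rho2

variable {M : ℕ} (hM : 2 ≤ M) {c : ℝ} (hc0 : 0 < c) (hcM : c < M)
  {r : ℕ → ℝ≥0∞}
  (hrdef : ∀ j : ℕ, r j = ENNReal.ofReal ((1 - c / M) * (c / M) ^ (j - 1)))
  {ρ : PMF (Omega M)} (hρ0 : ρ 0 = 0)
  (hρ : ∀ y : Omega M, y ≠ 0 →
    ρ y = r (hnorm y) / ((M : ℝ≥0∞) ^ (hnorm y - 1) * ((M : ℝ≥0∞) - 1)))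

include hM hρ0 hρ in
lemma rho_ball_sum (L : ℕ) : ρ.toMeasure (B M L) = ∑ j ∈ Finset.range L, r (j+1) := by
  induction L with
  | zero =>
    have hB0 : B M 0 = {0} := by
      ext x
      simp [B, Nat.le_zero, hnorm_eq_zero_iff]
    rw [hB0, PMF.toMeasure_apply_singleton _ _ (measurableSet_all _), hρ0]
    simp
  | succ L ih =>
    have hBsub : B M L ⊆ B M (L+1) := by
      intro y hy; simp only [B, Set.mem_setOf_eq] at *; omega
    have hsplit : B M (L+1) = B M L ∪ (B M (L+1) \ B M L) := (Set.union_diff_cancel hBsub).symm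
    rw [hsplit, measure_union (Set.disjoint_sdiff_right) (measurableSet_all _), ih,
      rho_sphere hM hρ L, Finset.sum_range_succ]

include hM hc0 hcM hrdef hρ0 hρ in
lemma rho_ball (L : ℕ) : ρ.toMeasure (B M L) = ENNReal.ofReal (1 - (c/M)^L) := by
  have hMpos : (0:ℝ) < M := by exact_mod_cast (by omega : 0 < M)
  have hx0 : (0:ℝ) ≤ c / M := by positivity
  have hx1 : c / M < 1 := by rw [div_lt_one hMpos]; exact hcM
  rw [rho_ball_sum hM hρ0 hρ]
  have h1 : ∀ j ∈ Finset.range L, r (j+1) = ENNReal.ofReal ((1 - c/M) * (c/M)^j) := by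
    intro j _
    rw [hrdef (j+1)]
    norm_num
  rw [Finset.sum_congr rfl h1,
    ← ENNReal.ofReal_sum_of_nonneg (fun j _ => by nlinarith [pow_nonneg hx0 j])]
  congr 1
  rw [← Finset.mul_sum]
  have h2 := geom_sum_mul (c/M) L
  ring_nf
  ring_nf at h2
  linarith

include hM hc0 hcM hrdef hρ0 hρ in
lemma rho_compl (L : ℕ) : ρ.toMeasure (B M L)ᶜ = ENNReal.ofReal ((c/M)^L) := by
  have hMpos : (0:ℝ) < M := by exact_mod_cast (by omega : 0 < M)
  have hx0 : (0:ℝ) ≤ c / M := by positivity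
  have hx1 : c / M ≤ 1 := by rw [div_le_one hMpos]; linarith
  have h1 : 0 ≤ 1 - (c/M)^L := by
    have h := pow_le_one₀ (n := L) hx0 hx1
    linarith
  rw [prob_compl_eq_one_sub (measurableSet_all (B M L)),
    rho_ball hM hc0 hcM hrdef hρ0 hρ L,
    ← ENNReal.ofReal_one, ← ENNReal.ofReal_sub 1 h1]
  congr 1
  ring

end Rho2
end CW

namespace CW
section Walk

variable {M : ℕ} {ρ : PMF (Omega M)} {L : ℕ}

lemma toMeasure_eq_tsum_mul (p : PMF (Omega M)) (s : Set (Omega M)) :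
    p.toMeasure s = ∑' x, p x * s.indicator (fun _ => (1:ℝ≥0∞)) x := by
  rw [toMeasure_apply']
  refine tsum_congr fun x => ?_
  by_cases hx : x ∈ s <;> simp [Set.indicator_of_mem, Set.indicator_of_notMem, hx]

lemma walk_step_apply (m : ℕ) (s : Set (Omega M)) :
    (walk ρ (m+1)).toMeasure s
      = ∑' x, walk ρ m x * ρ.toMeasure ((x + ·) ⁻¹' s) := by
  show ((walk ρ m).bind fun x => ρ.map (x + ·)).toMeasure s = _
  rw [PMF.toMeasure_bind_apply _ _ _ (measurableSet_all s)]
  refine tsum_congr fun x => ?_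
  rw [PMF.toMeasure_map_apply _ _ _ (measurable_all' _) (measurableSet_all s)]

lemma preimage_compl_of_mem {x : Omega M} (hx : x ∈ B M L) :
    (x + ·) ⁻¹' (B M L)ᶜ = (B M L)ᶜ := by
  ext s
  simp only [Set.mem_preimage, Set.mem_compl_iff]
  rw [add_mem_B_iff hx]

lemma subset_preimage_of_not_mem {x : Omega M} (hx : x ∉ B M L) :
    B M L ⊆ (x + ·) ⁻¹' (B M L)ᶜ := by
  intro s hs
  simp only [Set.mem_preimage, Set.mem_compl_iff]
  intro h
  have : x + s + (-s) ∈ B M L := add_mem_B h (neg_mem_B hs)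
  simp only [add_neg_cancel_right] at this
  exact hx this

lemma q_zero : (walk ρ 0).toMeasure (B M L)ᶜ = 0 := by
  show (PMF.pure 0).toMeasure (B M L)ᶜ = 0
  rw [PMF.toMeasure_pure_apply _ _ (measurableSet_all _)]
  simp [zero_mem_B]

lemma q_upper (m : ℕ) :
    (walk ρ (m+1)).toMeasure (B M L)ᶜ
      ≤ ρ.toMeasure (B M L)ᶜ + (walk ρ m).toMeasure (B M L)ᶜ := by
  rw [walk_step_apply m (B M L)ᶜ]
  have hb : ∀ x : Omega M, walk ρ m x * ρ.toMeasure ((x + ·) ⁻¹' (B M L)ᶜ)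
      ≤ walk ρ m x * ρ.toMeasure (B M L)ᶜ
        + walk ρ m x * (B M L)ᶜ.indicator (fun _ => (1:ℝ≥0∞)) x := by
    intro x
    by_cases hx : x ∈ B M L
    · rw [preimage_compl_of_mem hx]
      exact le_add_of_le_of_nonneg le_rfl zero_le
    · refine le_add_of_nonneg_of_le zero_le ?_
      rw [Set.indicator_of_mem (Set.mem_compl hx), mul_one]
      exact mul_le_of_le_one_right zero_le prob_le_one
  calc ∑' x, walk ρ m x * ρ.toMeasure ((x + ·) ⁻¹' (B M L)ᶜ)
      ≤ ∑' x, (walk ρ m x * ρ.toMeasure (B M L)ᶜ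
          + walk ρ m x * (B M L)ᶜ.indicator (fun _ => (1:ℝ≥0∞)) x) := ENNReal.tsum_le_tsum hb
    _ = ρ.toMeasure (B M L)ᶜ + (walk ρ m).toMeasure (B M L)ᶜ := by
        rw [ENNReal.tsum_add, ENNReal.tsum_mul_right, PMF.tsum_coe, one_mul,
          ← toMeasure_eq_tsum_mul]

lemma q_lower (m : ℕ) :
    ρ.toMeasure (B M L)ᶜ * (walk ρ m).toMeasure (B M L)
        + ρ.toMeasure (B M L) * (walk ρ m).toMeasure (B M L)ᶜ
      ≤ (walk ρ (m+1)).toMeasure (B M L)ᶜ := by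
  rw [walk_step_apply m (B M L)ᶜ]
  have hb : ∀ x : Omega M,
      walk ρ m x * (ρ.toMeasure (B M L)ᶜ * (B M L).indicator (fun _ => (1:ℝ≥0∞)) x)
        + walk ρ m x * (ρ.toMeasure (B M L) * (B M L)ᶜ.indicator (fun _ => (1:ℝ≥0∞)) x)
      ≤ walk ρ m x * ρ.toMeasure ((x + ·) ⁻¹' (B M L)ᶜ) := by
    intro x
    by_cases hx : x ∈ B M L
    · rw [preimage_compl_of_mem hx, Set.indicator_of_mem hx,
        Set.indicator_of_notMem (by simpa using hx), mul_one, mul_zero, mul_zero, add_zero]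
    · rw [Set.indicator_of_notMem hx, Set.indicator_of_mem (by simpa using hx),
        mul_zero, mul_zero, zero_add, mul_one]
      exact mul_le_mul_right (measure_mono (subset_preimage_of_not_mem hx)) _
  calc ρ.toMeasure (B M L)ᶜ * (walk ρ m).toMeasure (B M L)
        + ρ.toMeasure (B M L) * (walk ρ m).toMeasure (B M L)ᶜ
      = ∑' x, (walk ρ m x * (ρ.toMeasure (B M L)ᶜ * (B M L).indicator (fun _ => (1:ℝ≥0∞)) x)
          + walk ρ m x * (ρ.toMeasure (B M L) * (B M L)ᶜ.indicator (fun _ => (1:ℝ≥0∞)) x)) := by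
        rw [ENNReal.tsum_add]
        congr 1
        · calc ρ.toMeasure (B M L)ᶜ * (walk ρ m).toMeasure (B M L)
              = ρ.toMeasure (B M L)ᶜ
                * ∑' x, walk ρ m x * (B M L).indicator (fun _ => (1:ℝ≥0∞)) x := by
                rw [← toMeasure_eq_tsum_mul]
            _ = ∑' x, ρ.toMeasure (B M L)ᶜ
                * (walk ρ m x * (B M L).indicator (fun _ => (1:ℝ≥0∞)) x) :=
                ENNReal.tsum_mul_left.symm
            _ = _ := tsum_congr fun x => by ring
        · calc ρ.toMeasure (B M L) * (walk ρ m).toMeasure (B M L)ᶜ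
              = ρ.toMeasure (B M L)
                * ∑' x, walk ρ m x * (B M L)ᶜ.indicator (fun _ => (1:ℝ≥0∞)) x := by
                rw [← toMeasure_eq_tsum_mul]
            _ = ∑' x, ρ.toMeasure (B M L)
                * (walk ρ m x * (B M L)ᶜ.indicator (fun _ => (1:ℝ≥0∞)) x) :=
                ENNReal.tsum_mul_left.symm
            _ = _ := tsum_congr fun x => by ring
    _ ≤ _ := ENNReal.tsum_le_tsum hb

end Walk
end CW

namespace CW
section RealBounds

variable {M : ℕ} {ρ : PMF (Omega M)} {L : ℕ}

lemma compl_toReal (p : PMF (Omega M)) (s : Set (Omega M)) :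
    (p.toMeasure s).toReal = 1 - (p.toMeasure sᶜ).toReal := by
  have h := prob_add_prob_compl (μ := p.toMeasure) (measurableSet_all s)
  have h2 := congrArg ENNReal.toReal h
  rw [ENNReal.toReal_add (measure_ne_top _ _) (measure_ne_top _ _), ENNReal.toReal_one] at h2
  linarith

lemma qr_step_lower (m : ℕ) :
    (ρ.toMeasure (B M L)ᶜ).toReal + ((walk ρ m).toMeasure (B M L)ᶜ).toReal
        - 2 * (ρ.toMeasure (B M L)ᶜ).toReal * ((walk ρ m).toMeasure (B M L)ᶜ).toReal
      ≤ ((walk ρ (m+1)).toMeasure (B M L)ᶜ).toReal := by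
  have h := q_lower (ρ := ρ) (L := L) m
  have h2 := ENNReal.toReal_mono (measure_ne_top _ _) h
  rw [ENNReal.toReal_add (ENNReal.mul_ne_top (measure_ne_top _ _) (measure_ne_top _ _))
      (ENNReal.mul_ne_top (measure_ne_top _ _) (measure_ne_top _ _)),
    ENNReal.toReal_mul, ENNReal.toReal_mul,
    compl_toReal (walk ρ m) (B M L), compl_toReal ρ (B M L)] at h2
  nlinarith [h2]

lemma qr_upper_all (m : ℕ) :
    ((walk ρ m).toMeasure (B M L)ᶜ).toReal ≤ m * (ρ.toMeasure (B M L)ᶜ).toReal := by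
  induction m with
  | zero => rw [q_zero]; simp
  | succ m ih =>
    have h2 := ENNReal.toReal_mono
      (ENNReal.add_ne_top.2 ⟨measure_ne_top _ _, measure_ne_top _ _⟩)
      (q_upper (ρ := ρ) (L := L) m)
    rw [ENNReal.toReal_add (measure_ne_top _ _) (measure_ne_top _ _)] at h2
    push_cast
    linarith

lemma qr_lower_all (m : ℕ) :
    m * (ρ.toMeasure (B M L)ᶜ).toReal
        - (m : ℝ)^2 * (ρ.toMeasure (B M L)ᶜ).toReal^2
      ≤ ((walk ρ m).toMeasure (B M L)ᶜ).toReal := by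
  induction m with
  | zero => simp
  | succ m ih =>
    have h1 := qr_step_lower (ρ := ρ) (L := L) m
    have h2 := qr_upper_all (ρ := ρ) (L := L) m
    have he : 0 ≤ (ρ.toMeasure (B M L)ᶜ).toReal := ENNReal.toReal_nonneg
    push_cast
    nlinarith [sq_nonneg ((ρ.toMeasure (B M L)ᶜ).toReal)]

end RealBounds
end CW

namespace CW
section Conv

variable {M : ℕ} {c : ℝ} {r : ℕ → ℝ≥0∞} {ρ : PMF (Omega M)}

lemma rho_symm (hρ0 : ρ 0 = 0)
    (hρ : ∀ y : Omega M, y ≠ 0 →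
      ρ y = r (hnorm y) / ((M : ℝ≥0∞) ^ (hnorm y - 1) * ((M : ℝ≥0∞) - 1))) :
    ρ.map (fun y => -y) = ρ := by
  have hneg : ∀ y : Omega M, ρ (-y) = ρ y := by
    intro y
    by_cases hy : y = 0
    · subst hy; simp
    · rw [hρ y hy, hρ (-y) (by simpa using hy), hnorm_neg]
  ext y
  rw [PMF.map_apply]
  rw [tsum_eq_single (-y) ?_]
  · simp [hneg]
  · intro a ha
    rw [if_neg]
    intro h
    exact ha (by rw [h]; simp)

lemma walk_add (a b : ℕ) :
    walk ρ (a + b) = (walk ρ a).bind (fun x => (walk ρ b).map (x + ·)) := by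
  induction b with
  | zero =>
    show walk ρ a = _
    have h : (fun x : Omega M => (walk ρ 0).map (x + ·)) = PMF.pure := by
      funext x
      show (PMF.pure 0).map (x + ·) = PMF.pure x
      rw [PMF.pure_map, add_zero]
    rw [h, PMF.bind_pure]
  | succ b ih =>
    show (walk ρ (a + b)).bind (fun y => ρ.map (y + ·)) = _
    rw [ih, PMF.bind_bind]
    refine congrArg _ (funext fun x => ?_)
    rw [PMF.bind_map]
    show (walk ρ b).bind ((fun y => ρ.map (y + ·)) ∘ (x + ·))
      = ((walk ρ b).bind fun z => ρ.map (z + ·)).map (x + ·)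
    rw [PMF.map_bind]
    refine congrArg _ (funext fun z => ?_)
    show ρ.map ((x + z) + ·) = (ρ.map (z + ·)).map (x + ·)
    rw [PMF.map_comp]
    have h : ((x + ·) ∘ (z + ·) : Omega M → Omega M) = ((x + z) + ·) := by
      funext s
      show x + (z + s) = (x + z) + s
      rw [add_assoc]
    rw [h]

lemma walk_neg (hρ0 : ρ 0 = 0)
    (hρ : ∀ y : Omega M, y ≠ 0 →
      ρ y = r (hnorm y) / ((M : ℝ≥0∞) ^ (hnorm y - 1) * ((M : ℝ≥0∞) - 1)))
    (m : ℕ) :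
    (walk ρ m).map (fun y => -y) = walk ρ m := by
  induction m with
  | zero =>
    show (PMF.pure 0).map (fun y => -y) = PMF.pure (0 : Omega M)
    rw [PMF.pure_map, neg_zero]
  | succ m ih =>
    show ((walk ρ m).bind fun x => ρ.map (x + ·)).map (fun y => -y) = _
    rw [PMF.map_bind]
    have h1 : (fun x : Omega M => (ρ.map (x + ·)).map (fun y => -y))
        = (fun x : Omega M => ρ.map (-x + ·)) := by
      funext x
      rw [PMF.map_comp]
      have h : ((fun y : Omega M => -y) ∘ (x + ·)) = ((-x + ·) ∘ (fun y : Omega M => -y)) := by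
        funext s
        show -(x + s) = -x + -s
        rw [neg_add]
      rw [h, ← PMF.map_comp, rho_symm hρ0 hρ]
    rw [h1]
    have h2 : ((walk ρ m).bind fun x => ρ.map (-x + ·))
        = ((walk ρ m).map (fun y => -y)).bind fun x => ρ.map (x + ·) := by
      rw [PMF.bind_map]
      refine congrArg _ (funext fun x => ?_)
      show ρ.map (-x + ·) = ρ.map (-x + ·)
      rfl
    rw [h2, ih]
    rfl

lemma conv_eq (hρ0 : ρ 0 = 0)
    (hρ : ∀ y : Omega M, y ≠ 0 →
      ρ y = r (hnorm y) / ((M : ℝ≥0∞) ^ (hnorm y - 1) * ((M : ℝ≥0∞) - 1)))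
    (n : ℕ) :
    (walk ρ n).bind (fun x => (walk ρ n).map (fun y => x - y)) = walk ρ (n + n) := by
  rw [walk_add n n]
  refine congrArg _ (funext fun x => ?_)
  have h1 : (fun y : Omega M => x - y) = ((x + ·) ∘ (fun y : Omega M => -y)) := by
    funext y
    show x - y = x + (-y)
    rw [sub_eq_add_neg]
  rw [h1, ← PMF.map_comp, walk_neg hρ0 hρ]

end Conv
end CW

namespace CW
section Videntity

variable {M : ℕ}

lemma tsum_sub' {ι : Type*} (f g : ι → ℝ≥0∞) (hg : ∑' i, g i ≠ ⊤) (h : ∀ i, g i ≤ f i) :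
    ∑' i, (f i - g i) = ∑' i, f i - ∑' i, g i := by
  refine ENNReal.eq_sub_of_add_eq hg ?_
  rw [← ENNReal.tsum_add]
  refine tsum_congr fun i => ?_
  exact tsub_add_cancel_of_le (h i)

variable {c : ℝ} {r : ℕ → ℝ≥0∞} {ρ : PMF (Omega M)}

lemma a_u_eq (n L : ℕ) (u : Omega M) :
    (walk ρ n).toMeasure {x : Omega M | hnorm (u + x) ≤ L}
      = ∑' x, walk ρ n x * (B M L).indicator (fun _ => (1:ℝ≥0∞)) (u + x) := by
  rw [toMeasure_eq_tsum_mul]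
  refine tsum_congr fun x => ?_
  congr 1

lemma sum_a (hM : 2 ≤ M) (n L : ℕ) :
    ∑' u : Omega M, (walk ρ n).toMeasure {x : Omega M | hnorm (u + x) ≤ L}
      = (M : ℝ≥0∞) ^ L := by
  rw [tsum_congr (fun u => a_u_eq (ρ := ρ) n L u), ENNReal.tsum_comm]
  calc ∑' x, ∑' u, walk ρ n x * (B M L).indicator (fun _ => (1:ℝ≥0∞)) (u + x)
      = ∑' x, walk ρ n x * ∑' u, (B M L).indicator (fun _ => (1:ℝ≥0∞)) (u + x) := by
        exact tsum_congr fun x => ENNReal.tsum_mul_left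
    _ = ∑' x, walk ρ n x * (M : ℝ≥0∞) ^ L := by
        exact tsum_congr fun x => by rw [tsum_indicator_shift (by omega) L x]
    _ = (M : ℝ≥0∞) ^ L := by
        rw [ENNReal.tsum_mul_right, PMF.tsum_coe, one_mul]

lemma sum_a_sq (hM : 2 ≤ M)
    (hρ0 : ρ 0 = 0)
    (hρ : ∀ y : Omega M, y ≠ 0 →
      ρ y = r (hnorm y) / ((M : ℝ≥0∞) ^ (hnorm y - 1) * ((M : ℝ≥0∞) - 1)))
    (n L : ℕ) :
    ∑' u : Omega M, (walk ρ n).toMeasure {x : Omega M | hnorm (u + x) ≤ L}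
        * (walk ρ n).toMeasure {x : Omega M | hnorm (u + x) ≤ L}
      = (M : ℝ≥0∞) ^ L * (walk ρ (n + n)).toMeasure (B M L) := by
  set ind := (B M L).indicator (fun _ => (1:ℝ≥0∞)) with hind
  have h1 : ∀ u : Omega M,
      (walk ρ n).toMeasure {x : Omega M | hnorm (u + x) ≤ L}
        * (walk ρ n).toMeasure {x : Omega M | hnorm (u + x) ≤ L}
      = ∑' x, ∑' y, (walk ρ n x * ind (u + x)) * (walk ρ n y * ind (u + y)) := by
    intro u
    rw [a_u_eq n L u, ← ENNReal.tsum_mul_right]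
    exact tsum_congr fun x => ENNReal.tsum_mul_left.symm
  rw [tsum_congr h1, ENNReal.tsum_comm]
  have h2 : ∀ x : Omega M, ∑' u, ∑' y, (walk ρ n x * ind (u + x)) * (walk ρ n y * ind (u + y))
      = ∑' y, ∑' u, (walk ρ n x * ind (u + x)) * (walk ρ n y * ind (u + y)) := fun x =>
    ENNReal.tsum_comm
  rw [tsum_congr h2]
  have h3 : ∀ x y : Omega M,
      ∑' u, (walk ρ n x * ind (u + x)) * (walk ρ n y * ind (u + y))
      = walk ρ n x * (walk ρ n y * ((M : ℝ≥0∞) ^ L * ind (x - y))) := by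
    intro x y
    rw [← tsum_indicator_two (by omega : 1 ≤ M) L x y, ← ENNReal.tsum_mul_left,
      ← ENNReal.tsum_mul_left]
    exact tsum_congr fun u => by ring
  rw [tsum_congr (fun x => tsum_congr (fun y => h3 x y))]
  have h4 : (walk ρ (n + n)).toMeasure (B M L)
      = ∑' x, walk ρ n x * ∑' y, walk ρ n y * ind (x - y) := by
    rw [← conv_eq hρ0 hρ n, PMF.toMeasure_bind_apply _ _ _ (measurableSet_all _)]
    refine tsum_congr fun x => ?_
    congr 1
    rw [PMF.toMeasure_map_apply _ _ _ (measurable_all' _) (measurableSet_all _),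
      toMeasure_eq_tsum_mul]
    refine tsum_congr fun y => ?_
    congr 1
  rw [h4, ← ENNReal.tsum_mul_left]
  refine tsum_congr fun x => ?_
  rw [← ENNReal.tsum_mul_left, ← ENNReal.tsum_mul_left]
  exact tsum_congr fun y => by ring

end Videntity
end CW

namespace CW
section Vform

variable {M : ℕ} {c : ℝ} {r : ℕ → ℝ≥0∞} {ρ : PMF (Omega M)}

lemma V_formula (hM : 2 ≤ M)
    (hρ0 : ρ 0 = 0)
    (hρ : ∀ y : Omega M, y ≠ 0 →
      ρ y = r (hnorm y) / ((M : ℝ≥0∞) ^ (hnorm y - 1) * ((M : ℝ≥0∞) - 1)))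
    (n L : ℕ) :
    ∑' u : Omega M, (walk ρ n).toMeasure {x : Omega M | hnorm (u + x) ≤ L}
        * (1 - (walk ρ n).toMeasure {x : Omega M | hnorm (u + x) ≤ L})
      = (M : ℝ≥0∞) ^ L * (walk ρ (n + n)).toMeasure (B M L)ᶜ := by
  have hstep : ∀ u : Omega M,
      (walk ρ n).toMeasure {x : Omega M | hnorm (u + x) ≤ L}
          * (1 - (walk ρ n).toMeasure {x : Omega M | hnorm (u + x) ≤ L})
        = (walk ρ n).toMeasure {x : Omega M | hnorm (u + x) ≤ L}
          - (walk ρ n).toMeasure {x : Omega M | hnorm (u + x) ≤ L}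
            * (walk ρ n).toMeasure {x : Omega M | hnorm (u + x) ≤ L} := by
    intro u
    rw [ENNReal.mul_sub (fun _ _ => measure_ne_top _ _), mul_one]
  rw [tsum_congr hstep,
    tsum_sub' _ _ ?fin ?le, sum_a hM n L, sum_a_sq hM hρ0 hρ n L,
    prob_compl_eq_one_sub (measurableSet_all _),
    ENNReal.mul_sub (fun _ _ => ?fin2), mul_one]
  case fin =>
    refine ne_top_of_le_ne_top ?_ (ENNReal.tsum_le_tsum
      (fun u => mul_le_of_le_one_right' (prob_le_one)))
    rw [sum_a hM n L]
    exact ENNReal.pow_ne_top (ENNReal.natCast_ne_top M)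
  case le =>
    exact fun u => mul_le_of_le_one_right' (prob_le_one)
  case fin2 =>
    exact ENNReal.pow_ne_top (ENNReal.natCast_ne_top M)

end Vform
end CW

/-- For the `c`-random walk (`r_j = (1 - c/M)(c/M)^{j-1}`, `0 < c < M`), the number variance
`Var N_n(L)` tends to `0` if `c < 1`, to `2n` if `c = 1`, and to `∞` if `c > 1`. -/
theorem c_walk_number_variance (M : ℕ) (hM : 2 ≤ M) (c : ℝ) (hc0 : 0 < c) (hcM : c < M)
    (r : ℕ → ℝ≥0∞)
    (hrdef : ∀ j : ℕ, r j = ENNReal.ofReal ((1 - c / M) * (c / M) ^ (j - 1)))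
    (ρ : PMF (Omega M)) (hρ0 : ρ 0 = 0)
    (hρ : ∀ y : Omega M, y ≠ 0 →
      ρ y = r (hnorm y) / ((M : ℝ≥0∞) ^ (hnorm y - 1) * ((M : ℝ≥0∞) - 1)))
    (n : ℕ) (hn : 1 ≤ n)
    (V : ℕ → ℝ≥0∞)
    (hV : ∀ L : ℕ, V L = ∑' u : Omega M,
      (walk ρ n).toMeasure {x : Omega M | hnorm (u + x) ≤ L} *
        (1 - (walk ρ n).toMeasure {x : Omega M | hnorm (u + x) ≤ L})) :
    (c < 1 → Tendsto V atTop (nhds 0)) ∧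
    (c = 1 → Tendsto V atTop (nhds (2 * (n : ℝ≥0∞)))) ∧
    (1 < c → Tendsto V atTop (nhds ⊤)) := by
  have hMpos : (0:ℝ) < M := by exact_mod_cast (by omega : 0 < M)
  have hx0 : 0 ≤ c / M := by positivity
  have hx1 : c / M < 1 := by rw [div_lt_one hMpos]; exact hcM
  set m := n + n with hm
  have hmpos : (0:ℝ) < (m:ℝ) := by
    have : 1 ≤ m := by omega
    exact_mod_cast (by omega : 0 < m)
  -- V formula
  have hVq : ∀ L, V L = (M:ℝ≥0∞)^L * (walk ρ m).toMeasure (CW.B M L)ᶜ := by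
    intro L
    rw [hV L, CW.V_formula hM hρ0 hρ n L]
  -- step escape probability
  have he : ∀ L : ℕ, (ρ.toMeasure (CW.B M L)ᶜ).toReal = (c/M) ^ L := by
    intro L
    rw [CW.rho_compl hM hc0 hcM hrdef hρ0 hρ L, ENNReal.toReal_ofReal (by positivity)]
  have hqup : ∀ L : ℕ, ((walk ρ m).toMeasure (CW.B M L)ᶜ).toReal ≤ (m:ℝ) * (c/M)^L := by
    intro L
    have h := CW.qr_upper_all (ρ := ρ) (L := L) m
    rwa [he L] at h
  have hqlo : ∀ L : ℕ, (m:ℝ) * (c/M)^L - (m:ℝ)^2 * ((c/M)^L)^2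
      ≤ ((walk ρ m).toMeasure (CW.B M L)ᶜ).toReal := by
    intro L
    have h := CW.qr_lower_all (ρ := ρ) (L := L) m
    rwa [he L] at h
  have hMpowR : ∀ L : ℕ, ((M:ℝ≥0∞))^L = ENNReal.ofReal ((M:ℝ)^L) := by
    intro L
    rw [← ENNReal.ofReal_natCast M, ← ENNReal.ofReal_pow (by positivity)]
  have hMx : ∀ L : ℕ, (M:ℝ)^L * ((c/M)^L) = c^L := by
    intro L
    rw [div_pow]
    field_simp
  -- upper bound on V
  have hVup : ∀ L : ℕ, V L ≤ ENNReal.ofReal ((m:ℝ) * c^L) := by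
    intro L
    rw [hVq L]
    calc (M:ℝ≥0∞)^L * (walk ρ m).toMeasure (CW.B M L)ᶜ
        ≤ (M:ℝ≥0∞)^L * ENNReal.ofReal ((m:ℝ) * (c/M)^L) := by
          refine mul_le_mul_right ?_ _
          rw [← ENNReal.ofReal_toReal (measure_ne_top _ _)]
          exact ENNReal.ofReal_le_ofReal (hqup L)
      _ = ENNReal.ofReal ((M:ℝ)^L * ((m:ℝ) * (c/M)^L)) := by
          rw [hMpowR, ← ENNReal.ofReal_mul (by positivity)]
      _ = ENNReal.ofReal ((m:ℝ) * c^L) := by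
          congr 1
          rw [← hMx L]
          ring
  -- lower bound on V
  have hVlo : ∀ L : ℕ, ENNReal.ofReal ((m:ℝ) * c^L - (m:ℝ)^2 * c^L * (c/M)^L) ≤ V L := by
    intro L
    rw [hVq L]
    have h1 : ENNReal.ofReal ((m:ℝ) * (c/M)^L - (m:ℝ)^2 * ((c/M)^L)^2)
        ≤ (walk ρ m).toMeasure (CW.B M L)ᶜ := by
      rw [← ENNReal.ofReal_toReal (measure_ne_top ((walk ρ m).toMeasure) (CW.B M L)ᶜ)]
      exact ENNReal.ofReal_le_ofReal (hqlo L)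
    calc ENNReal.ofReal ((m:ℝ) * c^L - (m:ℝ)^2 * c^L * (c/M)^L)
        = ENNReal.ofReal ((M:ℝ)^L * ((m:ℝ) * (c/M)^L - (m:ℝ)^2 * ((c/M)^L)^2)) := by
          congr 1
          rw [← hMx L]
          ring
      _ = (M:ℝ≥0∞)^L * ENNReal.ofReal ((m:ℝ) * (c/M)^L - (m:ℝ)^2 * ((c/M)^L)^2) := by
          rw [hMpowR, ← ENNReal.ofReal_mul (by positivity)]
      _ ≤ _ := mul_le_mul_right h1 _
  refine ⟨?_, ?_, ?_⟩
  · -- c < 1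
    intro hlt
    have hreal : Tendsto (fun L : ℕ => (m:ℝ) * c^L) atTop (nhds 0) := by
      simpa using (tendsto_pow_atTop_nhds_zero_of_lt_one (le_of_lt hc0) hlt).const_mul (m:ℝ)
    have hup : Tendsto (fun L : ℕ => ENNReal.ofReal ((m:ℝ) * c^L)) atTop (nhds 0) := by
      have := (ENNReal.continuous_ofReal.tendsto 0).comp hreal
      simpa [Function.comp_def] using this
    exact tendsto_of_tendsto_of_tendsto_of_le_of_le tendsto_const_nhds hup
      (fun L => zero_le) hVup
  · -- c = 1
    intro hc
    subst hc
    have hlim : (2 * (n : ℝ≥0∞)) = ENNReal.ofReal (m:ℝ) := by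
      rw [ENNReal.ofReal_natCast, hm]
      push_cast
      ring
    rw [hlim]
    have hlow : Tendsto (fun L : ℕ => ENNReal.ofReal ((m:ℝ) * 1^L - (m:ℝ)^2 * 1^L * (1/(M:ℝ))^L))
        atTop (nhds (ENNReal.ofReal (m:ℝ))) := by
      have hreal : Tendsto (fun L : ℕ => (m:ℝ) * 1^L - (m:ℝ)^2 * 1^L * (1/(M:ℝ))^L)
          atTop (nhds (m:ℝ)) := by
        have h2 : Tendsto (fun L : ℕ => (1/(M:ℝ))^L) atTop (nhds 0) :=
          tendsto_pow_atTop_nhds_zero_of_lt_one (by positivity)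
            (by rw [div_lt_one hMpos]; exact_mod_cast (by omega : 1 < M))
        have h3 := h2.const_mul ((m:ℝ)^2)
        simp only [mul_zero] at h3
        have h4 := (tendsto_const_nhds (x := (m:ℝ)) (f := atTop (α := ℕ))).sub h3
        simpa using h4
      have := (ENNReal.continuous_ofReal.tendsto (m:ℝ)).comp hreal
      simpa [Function.comp_def] using this
    have hup : Tendsto (fun L : ℕ => ENNReal.ofReal ((m:ℝ) * 1^L)) atTop
        (nhds (ENNReal.ofReal (m:ℝ))) := by
      simp only [one_pow, mul_one]
      exact tendsto_const_nhds
    refine tendsto_of_tendsto_of_tendsto_of_le_of_le hlow hup ?_ ?_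
    · intro L
      have := hVlo L
      simpa using this
    · intro L
      have := hVup L
      simpa using this
  · -- 1 < c
    intro hlt
    have hreal : Tendsto (fun L : ℕ => (m:ℝ) * c^L - (m:ℝ)^2 * c^L * (c/M)^L) atTop atTop := by
      have h1 : Tendsto (fun L : ℕ => (m:ℝ) * c^L) atTop atTop :=
        (tendsto_pow_atTop_atTop_of_one_lt hlt).const_mul_atTop hmpos
      have h2 : Tendsto (fun L : ℕ => 1 - (m:ℝ) * (c/M)^L) atTop (nhds 1) := by
        have h3 : Tendsto (fun L : ℕ => (c/M)^L) atTop (nhds 0) :=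
          tendsto_pow_atTop_nhds_zero_of_lt_one hx0 hx1
        have h4 := h3.const_mul (m:ℝ)
        simp only [mul_zero] at h4
        have h5 := (tendsto_const_nhds (x := (1:ℝ)) (f := atTop (α := ℕ))).sub h4
        simpa using h5
      have h6 := Filter.Tendsto.pos_mul_atTop one_pos h2 h1
      refine h6.congr fun L => ?_
      ring
    have hof : Tendsto (fun L : ℕ => ENNReal.ofReal ((m:ℝ) * c^L - (m:ℝ)^2 * c^L * (c/M)^L))
        atTop (nhds ⊤) := ENNReal.tendsto_ofReal_atTop.comp hreal
    exact tendsto_nhds_top_mono' hof hVlo
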